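/- Let n ≥ 2 and let i, j ∈ {1,…,n−1}. Then the following two subsets of ℝ[X] × ℝ[X] are equal: { (det(X·I − A(i; ℓ, a)), det((X·I − A(i; ℓ, a))^{(1,n)})) : ℓ > 0, a_1 > 0, …, a_{n−1} > 0 } and { (det(X·I − A(j; ℓ, a)), det((X·I − A(j; ℓ, a))^{(1,n)})) : ℓ > 0, a_1 > 0, …, a_{n−1} > 0 }. That is, the path models with input in compartment 1, output in compartment n, and a single leak from compartment i, respectively compartment j, are indistinguishable: their coefficient maps restricted to positive parameters have the same image. -/

import Mathlib

open Polynomial Matrix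

/-- The path-with-leak compartmental matrix `A(i; ℓ, a)` for the directed path
`1 → 2 → ⋯ → n` with a leak from compartment `i`.  Compartment `k` (for
`1 ≤ k ≤ n`) is encoded as the index `k - 1 : Fin n`. -/
def pathLeak {R : Type*} [CommRing R] (n : ℕ) (i : ℕ) (l : R) (a : ℕ → R) :
    Matrix (Fin n) (Fin n) R :=
  Matrix.of fun u v =>
    if u = v then
      (if (u : ℕ) + 1 = n then 0
       else if (u : ℕ) + 1 = i then -l - a i
       else -a ((u : ℕ) + 1))
    else if (u : ℕ) = (v : ℕ) + 1 then a ((v : ℕ) + 1)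
    else 0

/-- `M^{(1,n)}`: the `(n-1)×(n-1)` matrix obtained from an `n×n` matrix `M`
by deleting row `1` (index `0`) and column `n` (index `n-1`). -/
def minor1n {S : Type*} {n : ℕ} (M : Matrix (Fin n) (Fin n) S) :
    Matrix (Fin (n - 1)) (Fin (n - 1)) S :=
  M.submatrix (fun k => ⟨(k : ℕ) + 1, by have := k.isLt; omega⟩)
    (fun k => ⟨(k : ℕ), by have := k.isLt; omega⟩)

/-- The image of the coefficient map (the pair of polynomials
`(det(X·I − A(i; ℓ, a)), det((X·I − A(i; ℓ, a))^{(1,n)}))`) of the path model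
with a leak in compartment `i`, over positive parameters `ℓ > 0`,
`a_1, …, a_{n-1} > 0`. -/
def coeffImage (n : ℕ) (i : ℕ) : Set (Polynomial ℝ × Polynomial ℝ) :=
  {p | ∃ (l : ℝ) (a : ℕ → ℝ), 0 < l ∧ (∀ k, 1 ≤ k → k ≤ n - 1 → 0 < a k) ∧
        p = ((charmatrix (pathLeak n i l a)).det,
             (minor1n (charmatrix (pathLeak n i l a))).det)}

lemma pathLeak_apply_of_ne {n i : ℕ} {l : ℝ} {a : ℕ → ℝ} {u v : Fin n}
    (h1 : (u:ℕ) ≠ (v:ℕ)) (h2 : (u:ℕ) ≠ (v:ℕ) + 1) :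
    pathLeak n i l a u v = 0 := by
  simp only [pathLeak, Matrix.of_apply]
  rw [if_neg (fun h => h1 (congrArg Fin.val h)), if_neg h2]

lemma pathLeak_apply_sub {n i : ℕ} {l : ℝ} {a : ℕ → ℝ} {u v : Fin n}
    (h2 : (u:ℕ) = (v:ℕ) + 1) :
    pathLeak n i l a u v = a ((v:ℕ) + 1) := by
  have h1 : u ≠ v := fun h => by
    have := congrArg Fin.val h; omega
  simp only [pathLeak, Matrix.of_apply]
  rw [if_neg h1, if_pos h2]

lemma pathLeak_det (n i : ℕ) (l : ℝ) (a : ℕ → ℝ) :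
    (charmatrix (pathLeak n i l a)).det
      = ∏ u : Fin n, (X - C (pathLeak n i l a u u)) := by
  rw [Matrix.det_of_lowerTriangular]
  · exact Finset.prod_congr rfl fun u _ => charmatrix_apply_eq _ _
  · intro u v huv
    have hlt : (u:ℕ) < (v:ℕ) := huv
    rw [charmatrix_apply_ne _ _ _ (by intro h; rw [h] at hlt; omega),
      pathLeak_apply_of_ne (by omega) (by omega), map_zero, neg_zero]

lemma pathLeak_minor_det (n i : ℕ) (l : ℝ) (a : ℕ → ℝ) :
    (minor1n (charmatrix (pathLeak n i l a))).det
      = ∏ k : Fin (n-1), (- C (a ((k:ℕ) + 1))) := by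
  rw [Matrix.det_of_upperTriangular]
  · refine Finset.prod_congr rfl fun k _ => ?_
    show charmatrix (pathLeak n i l a) ⟨(k:ℕ)+1, _⟩ ⟨(k:ℕ), _⟩ = _
    rw [charmatrix_apply_ne _ _ _ (by intro h; exact absurd (congrArg Fin.val h) (by simp)),
      pathLeak_apply_sub rfl]
  · intro u v huv
    have huv' : (v:ℕ) < (u:ℕ) := huv
    show charmatrix (pathLeak n i l a) ⟨(u:ℕ)+1, _⟩ ⟨(v:ℕ), _⟩ = 0
    rw [charmatrix_apply_ne _ _ _ (by intro h; exact absurd (congrArg Fin.val h) (by simp; omega)),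
      pathLeak_apply_of_ne (by simp; omega) (by simp; omega), map_zero, neg_zero]

lemma prod_two_swap {ι : Type*} [DecidableEq ι] (s : Finset ι) (f g : ι → ℝ) (x y : ι)
    (hx : x ∈ s) (hy : y ∈ s) (hxy : x ≠ y)
    (hfg : ∀ z ∈ s, z ≠ x → z ≠ y → f z = g z)
    (h2 : f x * f y = g x * g y) :
    ∏ z ∈ s, f z = ∏ z ∈ s, g z := by
  have hy' : y ∈ s.erase x := Finset.mem_erase.mpr ⟨hxy.symm, hy⟩
  rw [← Finset.mul_prod_erase s f hx, ← Finset.mul_prod_erase s g hx,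
      ← Finset.mul_prod_erase _ f hy', ← Finset.mul_prod_erase _ g hy',
      ← mul_assoc, ← mul_assoc, h2]
  congr 1
  refine Finset.prod_congr rfl fun z hz => ?_
  have h1 := Finset.mem_erase.mp hz
  have h0 := Finset.mem_erase.mp h1.2
  exact hfg z h0.2 h0.1 h1.1

lemma diag_eq (n i j : ℕ) (hij : i ≠ j) (l : ℝ) (a : ℕ → ℝ) (hla : a i + l ≠ 0) (u : Fin n) :
    pathLeak n i l a u u
      = pathLeak n j (a j * l / (a i + l))
          (fun k => if k = i then a i + l else if k = j then a i * a j / (a i + l) else a k)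
          u u := by
  simp only [pathLeak, Matrix.of_apply, if_pos rfl]
  beta_reduce
  by_cases hn' : (u:ℕ) + 1 = n
  · rw [if_pos hn', if_pos hn']
    simp
  rw [if_neg hn', if_neg hn']
  by_cases hui : (u:ℕ) + 1 = i
  · rw [if_pos hui, if_neg (show ¬((u:ℕ) + 1 = j) by omega), if_pos hui]
    simp only [if_true]
    try ring
    try simp
    try ring
  · rw [if_neg hui]
    by_cases huj : (u:ℕ) + 1 = j
    · rw [if_pos huj, huj, if_neg (show ¬(j = i) by omega), if_pos rfl]
      simp only [eq_self_iff_true, if_true]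
      field_simp
      ring
    · rw [if_neg huj, if_neg hui, if_neg huj]

/-- Theorem (indistinguishability of the path models with a leak in compartment
`i`, resp. `j`): the images of their coefficient maps over positive parameters
coincide. -/
theorem pathLeak_indistinguishable (n : ℕ) (hn : 2 ≤ n) (i j : ℕ)
    (hi1 : 1 ≤ i) (hi2 : i ≤ n - 1) (hj1 : 1 ≤ j) (hj2 : j ≤ n - 1) :
    coeffImage n i = coeffImage n j := by
  have key : ∀ i j : ℕ, 1 ≤ i → i ≤ n - 1 → 1 ≤ j → j ≤ n - 1 →
      coeffImage n i ⊆ coeffImage n j := by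
    intro i j hi1 hi2 hj1 hj2 p hp
    obtain ⟨l, a, hl, ha, rfl⟩ := hp
    by_cases hij : i = j
    · exact ⟨l, a, hl, ha, by rw [hij]⟩
    have hai : 0 < a i := ha i hi1 hi2
    have haj : 0 < a j := ha j hj1 hj2
    have hs : 0 < a i + l := by linarith
    have hs' : a i + l ≠ 0 := ne_of_gt hs
    refine ⟨a j * l / (a i + l),
      fun k => if k = i then a i + l else if k = j then a i * a j / (a i + l) else a k,
      by positivity, ?_, ?_⟩
    · intro k hk1 hk2
      dsimp only
      split_ifs
      · linarith
      · positivity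
      · exact ha k hk1 hk2
    · rw [Prod.mk.injEq]
      constructor
      · rw [pathLeak_det, pathLeak_det]
        exact Finset.prod_congr rfl fun u _ => by rw [diag_eq n i j hij l a hs' u]
      · rw [pathLeak_minor_det, pathLeak_minor_det]
        simp only [← map_neg C]
        rw [← map_prod, ← map_prod]
        congr 1
        have hx : i - 1 < n - 1 := by omega
        have hy : j - 1 < n - 1 := by omega
        refine prod_two_swap Finset.univ _ _ ⟨i-1, hx⟩ ⟨j-1, hy⟩ (Finset.mem_univ _)
          (Finset.mem_univ _) (by simp [Fin.ext_iff]; omega) ?_ ?_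
        · intro z _ hzx hzy
          have hz1 : (z:ℕ) + 1 ≠ i := fun h => hzx (Fin.ext (show (z:ℕ) = i - 1 by omega))
          have hz2 : (z:ℕ) + 1 ≠ j := fun h => hzy (Fin.ext (show (z:ℕ) = j - 1 by omega))
          beta_reduce
          rw [if_neg hz1, if_neg hz2]
        · have e1 : i - 1 + 1 = i := by omega
          have e2 : j - 1 + 1 = j := by omega
          beta_reduce
          show -a (i - 1 + 1) * -a (j - 1 + 1) = _
          rw [e1, e2, if_pos rfl, if_neg (show ¬(j = i) by omega), if_pos rfl]
          field_simp
  exact le_antisymm (key i j hi1 hi2 hj1 hj2) (key j i hj1 hj2 hi1 hi2)
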